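/- Let X_1,…,X_n, Y_1,…,Y_n be mutually independent nonnegative random variables with X_i and Y_i identically distributed (continuous, so all 2n values are almost surely distinct). The rule 'select index i such that X_i = max_j X_j, provided X_i > Y_i; otherwise select nothing' picks a value whose expectation is at least (1/2)·E[max_j X_j]. -/

import Mathlib

open Finset MeasureTheory ProbabilityTheory

/-- The single-sample offline rule (select the maximizer `i` of the `X`'s
provided `X i > Y i`) is `1/2`-competitive against `E[max_j X_j]`. -/
theorem stmt_10 {Ω : Type*} [MeasurableSpace Ω] (μ : Measure Ω)
    [IsProbabilityMeasure μ]
    (n : ℕ) (hn : 0 < n) (X Y : Fin n → Ω → ℝ)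
    (hmX : ∀ i, Measurable (X i)) (hmY : ∀ i, Measurable (Y i))
    (hnonneg : ∀ᵐ ω ∂μ, ∀ i, 0 ≤ X i ω ∧ 0 ≤ Y i ω)
    (hindep : iIndepFun (Sum.elim X Y) μ)
    (hid : ∀ i, IdentDistrib (X i) (Y i) μ μ)
    (hdistinct : ∀ᵐ ω ∂μ,
      Function.Injective (fun q : Fin n ⊕ Fin n => Sum.elim X Y q ω))
    (hint : Integrable (fun ω => ⨆ i, X i ω) μ) :
    (1 / 2 : ℝ) * ∫ ω, (⨆ i, X i ω) ∂μ ≤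
      ∫ ω, Set.indicator
        {ω | ∃ i, (∀ j, X j ω ≤ X i ω) ∧ Y i ω < X i ω}
        (fun ω => ⨆ i, X i ω) ω ∂μ := by
  classical
  haveI : NeZero n := ⟨hn.ne'⟩
  set Z : Fin n ⊕ Fin n → Ω → ℝ := Sum.elim X Y with hZ
  set M : Ω → ℝ := fun ω => ⨆ i, X i ω with hM
  set A : Set Ω := {ω | ∃ i, (∀ j, X j ω ≤ X i ω) ∧ Y i ω < X i ω} with hA
  set Ai : Fin n → Set Ω := fun i => {ω | ∀ q, Z q ω ≤ X i ω} with hAi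
  set Bi : Fin n → Set Ω := fun i => {ω | ∀ q, Z q ω ≤ Y i ω} with hBi
  have hmZ : ∀ q, Measurable (Z q) := by
    rintro (j | j)
    · exact hmX j
    · exact hmY j
  have hXleM : ∀ ω (j : Fin n), X j ω ≤ M ω := fun ω j =>
    le_ciSup (Set.Finite.bddAbove (Set.finite_range fun i => X i ω)) j
  have hMle : ∀ ω (c : ℝ), (∀ j, X j ω ≤ c) → M ω ≤ c := fun ω c h => ciSup_le h
  have hmsAi : ∀ i, MeasurableSet (Ai i) := by
    intro i
    rw [hAi]
    simp only [Set.setOf_forall]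
    exact MeasurableSet.iInter fun q => measurableSet_le (hmZ q) (hmX i)
  have hmsBi : ∀ i, MeasurableSet (Bi i) := by
    intro i
    rw [hBi]
    simp only [Set.setOf_forall]
    exact MeasurableSet.iInter fun q => measurableSet_le (hmZ q) (hmY i)
  have hmsA : MeasurableSet A := by
    rw [hA, Set.setOf_exists]
    refine MeasurableSet.iUnion fun i => ?_
    simp only [Set.setOf_and, Set.setOf_forall]
    exact ((MeasurableSet.iInter fun j => measurableSet_le (hmX j) (hmX i)).inter
        (measurableSet_lt (hmY i) (hmX i)))
  -- integrability
  have h_int_X : ∀ i, Integrable (X i) μ := by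
    intro i
    refine hint.mono (hmX i).aestronglyMeasurable ?_
    filter_upwards [hnonneg] with ω hω
    rw [Real.norm_eq_abs, Real.norm_eq_abs, abs_of_nonneg (hω i).1,
      abs_of_nonneg (le_trans (hω i).1 (hXleM ω i))]
    exact hXleM ω i
  have h_int_Y : ∀ i, Integrable (Y i) μ := fun i => ((hid i).integrable_iff).mp (h_int_X i)
  have h_int_Ai : ∀ i, Integrable ((Ai i).indicator (X i)) μ := fun i =>
    (h_int_X i).indicator (hmsAi i)
  have h_int_Bi : ∀ i, Integrable ((Bi i).indicator (Y i)) μ := fun i =>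
    (h_int_Y i).indicator (hmsBi i)
  have h_int_AM : Integrable (A.indicator M) μ := hint.indicator hmsA
  have h_int_sumA : Integrable (fun ω => ∑ i, (Ai i).indicator (X i) ω) μ :=
    integrable_finset_sum _ fun i _ => h_int_Ai i
  have h_int_sumB : Integrable (fun ω => ∑ i, (Bi i).indicator (Y i) ω) μ :=
    integrable_finset_sum _ fun i _ => h_int_Bi i
  -- the joint law is a product measure
  set V : Ω → (Fin n ⊕ Fin n → ℝ) := fun ω q => Z q ω with hV
  have hmV : Measurable V := measurable_pi_lambda _ hmZ
  set ν : Fin n ⊕ Fin n → Measure ℝ := fun q => μ.map (Z q) with hν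
  haveI : ∀ q, IsProbabilityMeasure (ν q) := fun q =>
    Measure.isProbabilityMeasure_map (hmZ q).aemeasurable
  have hmap : Measure.pi ν = μ.map V := by
    refine Measure.pi_eq fun s hs => ?_
    rw [Measure.map_apply hmV (MeasurableSet.univ_pi hs)]
    have hpre : V ⁻¹' Set.pi Set.univ s = ⋂ q ∈ Finset.univ, Z q ⁻¹' s q := by
      ext ω; simp [Set.mem_pi, hV]
    rw [hpre, hindep.measure_inter_preimage_eq_mul Finset.univ (fun q _ => hs q)]
    exact Finset.prod_congr rfl fun q _ => (Measure.map_apply (hmZ q) (hs q)).symm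
  -- the key exchange identity
  have hI1 : ∀ i, ∫ ω, (Ai i).indicator (X i) ω ∂μ = ∫ ω, (Bi i).indicator (Y i) ω ∂μ := by
    intro i
    set e : (Fin n ⊕ Fin n) ≃ (Fin n ⊕ Fin n) := Equiv.swap (Sum.inl i) (Sum.inr i) with he
    have he1 : e (Sum.inl i) = Sum.inr i := Equiv.swap_apply_left _ _
    have hνe : ∀ q, ν (e q) = ν q := by
      intro q
      rcases eq_or_ne q (Sum.inl i) with rfl | h1
      · rw [he1]
        show μ.map (Y i) = μ.map (X i)
        exact (hid i).map_eq.symm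
      rcases eq_or_ne q (Sum.inr i) with rfl | h2
      · rw [show e (Sum.inr i) = Sum.inl i from Equiv.swap_apply_right _ _]
        exact (hid i).map_eq
      · rw [Equiv.swap_apply_of_ne_of_ne h1 h2]
    have hme : Measurable (fun v : (Fin n ⊕ Fin n) → ℝ => v ∘ e) :=
      measurable_pi_lambda _ fun q => measurable_pi_apply (e q)
    have hpi_swap : (Measure.pi ν).map (fun v : (Fin n ⊕ Fin n) → ℝ => v ∘ e)
        = Measure.pi ν := by
      refine (Measure.pi_eq fun s hs => ?_).symm
      rw [Measure.map_apply hme (MeasurableSet.univ_pi hs)]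
      have hpre : (fun v : (Fin n ⊕ Fin n) → ℝ => v ∘ e) ⁻¹' Set.pi Set.univ s
          = Set.pi Set.univ (fun q => s (e.symm q)) := by
        ext v
        simp only [Set.mem_preimage, Set.mem_pi, Set.mem_univ, forall_true_left,
          Function.comp]
        constructor
        · intro h q; simpa using h (e.symm q)
        · intro h q; simpa using h (e q)
      rw [hpre, Measure.pi_pi]
      have : ∀ q, ν q (s (e.symm q)) = ν (e.symm q) (s (e.symm q)) := by
        intro q
        have hq : ν q = ν (e.symm q) := by
          rw [← hνe (e.symm q), Equiv.apply_symm_apply]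
        rw [hq]
      rw [Finset.prod_congr rfl fun q _ => this q]
      exact (Equiv.prod_comp e.symm fun q => ν q (s q))
    have hswap : ∀ (φ : (Fin n ⊕ Fin n → ℝ) → ℝ), Measurable φ →
        ∫ ω, φ (V ω) ∂μ = ∫ ω, φ (V ω ∘ e) ∂μ := by
      intro φ hφ
      have h1 : ∫ ω, φ (V ω) ∂μ = ∫ v, φ v ∂(μ.map V) :=
        (integral_map hmV.aemeasurable hφ.aestronglyMeasurable).symm
      have h2 : ∫ ω, φ (V ω ∘ e) ∂μ = ∫ v, φ (v ∘ e) ∂(μ.map V) :=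
        (integral_map hmV.aemeasurable (hφ.comp hme).aestronglyMeasurable).symm
      rw [h1, h2, ← hmap, ← hpi_swap,
        integral_map hme.aemeasurable hφ.aestronglyMeasurable, hpi_swap]
    set S : Set ((Fin n ⊕ Fin n) → ℝ) := {v | ∀ q, v q ≤ v (Sum.inl i)} with hS
    have hmsS : MeasurableSet S := by
      rw [hS, Set.setOf_forall]
      exact MeasurableSet.iInter fun q =>
        measurableSet_le (measurable_pi_apply q) (measurable_pi_apply _)
    set φ : ((Fin n ⊕ Fin n) → ℝ) → ℝ := S.indicator (fun v => v (Sum.inl i)) with hφdef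
    have hmφ : Measurable φ := (measurable_pi_apply _).indicator hmsS
    have hl : ∀ ω, φ (V ω) = (Ai i).indicator (X i) ω := by
      intro ω
      by_cases h : ω ∈ Ai i
      · rw [hφdef, Set.indicator_of_mem (show V ω ∈ S from h), Set.indicator_of_mem h]
        rfl
      · rw [hφdef, Set.indicator_of_notMem (show V ω ∉ S from h), Set.indicator_of_notMem h]
    have hr : ∀ ω, φ (V ω ∘ e) = (Bi i).indicator (Y i) ω := by
      intro ω
      have hmem : (V ω ∘ e) ∈ S ↔ ω ∈ Bi i := by
        constructor
        · intro h q
          have := h (e.symm q)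
          simp only [Function.comp_apply, Equiv.apply_symm_apply, he1] at this
          exact this
        · intro h q
          simp only [Function.comp_apply, he1]
          exact h (e q)
      have hval : (V ω ∘ e) (Sum.inl i) = Y i ω := by
        simp only [Function.comp_apply, he1]; rfl
      by_cases h : ω ∈ Bi i
      · rw [hφdef, Set.indicator_of_mem (hmem.mpr h), Set.indicator_of_mem h, hval]
      · rw [hφdef, Set.indicator_of_notMem (fun hc => h (hmem.mp hc)),
          Set.indicator_of_notMem h]
    calc ∫ ω, (Ai i).indicator (X i) ω ∂μ = ∫ ω, φ (V ω) ∂μ := by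
          simp_rw [hl]
      _ = ∫ ω, φ (V ω ∘ e) ∂μ := hswap φ hmφ
      _ = ∫ ω, (Bi i).indicator (Y i) ω ∂μ := by simp_rw [hr]
  -- pointwise a.e. inequalities
  have h_sumA : ∀ᵐ ω ∂μ, ∑ i, (Ai i).indicator (X i) ω ≤ A.indicator M ω := by
    filter_upwards [hnonneg, hdistinct] with ω hpos hinj
    by_cases hex : ∃ i, ω ∈ Ai i
    · obtain ⟨i, hi⟩ := hex
      have hsum : ∑ j, (Ai j).indicator (X j) ω = X i ω := by
        rw [Finset.sum_eq_single i]
        · exact Set.indicator_of_mem hi _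
        · intro j _ hji
          refine Set.indicator_of_notMem (fun hj => hji ?_) _
          have h1 : X j ω ≤ X i ω := hi (Sum.inl j)
          have h2 : X i ω ≤ X j ω := hj (Sum.inl i)
          have : (Sum.inl j : Fin n ⊕ Fin n) = Sum.inl i := hinj (le_antisymm h2 h1).symm
          exact Sum.inl.injEq _ _ ▸ (by injection this)
        · intro h; exact absurd (Finset.mem_univ i) h
      have hYX : Y i ω < X i ω := by
        refine lt_of_le_of_ne (hi (Sum.inr i)) fun hc => ?_
        have : (Sum.inr i : Fin n ⊕ Fin n) = Sum.inl i := hinj hc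
        simp at this
      have hAmem : ω ∈ A := ⟨i, fun j => hi (Sum.inl j), hYX⟩
      have hMX : M ω = X i ω :=
        le_antisymm (hMle ω _ fun j => hi (Sum.inl j)) (hXleM ω i)
      rw [hsum, Set.indicator_of_mem hAmem, hMX]
    · push_neg at hex
      have hsum : ∑ j, (Ai j).indicator (X j) ω = 0 :=
        Finset.sum_eq_zero fun j _ => Set.indicator_of_notMem (hex j) _
      rw [hsum]
      exact Set.indicator_apply_nonneg fun _ =>
        le_trans (hpos ⟨0, hn⟩).1 (hXleM ω ⟨0, hn⟩)
  have h_cover : ∀ᵐ ω ∂μ,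
      M ω ≤ (∑ i, (Ai i).indicator (X i) ω) + ∑ i, (Bi i).indicator (Y i) ω := by
    filter_upwards [hnonneg] with ω hpos
    have hnnA : ∀ j ∈ Finset.univ, (0:ℝ) ≤ (Ai j).indicator (X j) ω := fun j _ =>
      Set.indicator_apply_nonneg fun _ => (hpos j).1
    have hnnB : ∀ j ∈ Finset.univ, (0:ℝ) ≤ (Bi j).indicator (Y j) ω := fun j _ =>
      Set.indicator_apply_nonneg fun _ => (hpos j).2
    obtain ⟨q0, hq0⟩ := Finite.exists_max fun q => Z q ω
    rcases q0 with i | i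
    · have hmem : ω ∈ Ai i := fun q => hq0 q
      have h1 : M ω ≤ (Ai i).indicator (X i) ω := by
        rw [Set.indicator_of_mem hmem]
        exact hMle ω _ fun j => hq0 (Sum.inl j)
      calc M ω ≤ (Ai i).indicator (X i) ω := h1
        _ ≤ ∑ j, (Ai j).indicator (X j) ω :=
            Finset.single_le_sum hnnA (Finset.mem_univ i)
        _ ≤ _ := le_add_of_nonneg_right (Finset.sum_nonneg hnnB)
    · have hmem : ω ∈ Bi i := fun q => hq0 q
      have h1 : M ω ≤ (Bi i).indicator (Y i) ω := by
        rw [Set.indicator_of_mem hmem]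
        exact hMle ω _ fun j => hq0 (Sum.inl j)
      calc M ω ≤ (Bi i).indicator (Y i) ω := h1
        _ ≤ ∑ j, (Bi j).indicator (Y j) ω :=
            Finset.single_le_sum hnnB (Finset.mem_univ i)
        _ ≤ _ := le_add_of_nonneg_left (Finset.sum_nonneg hnnA)
  -- assemble
  have key1 : ∫ ω, (∑ i, (Ai i).indicator (X i) ω) ∂μ ≤ ∫ ω, A.indicator M ω ∂μ :=
    integral_mono_ae h_int_sumA h_int_AM h_sumA
  have key2 : ∫ ω, M ω ∂μ ≤
      ∫ ω, ((∑ i, (Ai i).indicator (X i) ω) + ∑ i, (Bi i).indicator (Y i) ω) ∂μ :=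
    integral_mono_ae hint (h_int_sumA.add h_int_sumB) h_cover
  have hsplit : ∫ ω, ((∑ i, (Ai i).indicator (X i) ω) + ∑ i, (Bi i).indicator (Y i) ω) ∂μ
      = ∫ ω, (∑ i, (Ai i).indicator (X i) ω) ∂μ + ∫ ω, (∑ i, (Bi i).indicator (Y i) ω) ∂μ :=
    integral_add h_int_sumA h_int_sumB
  have hAB : ∫ ω, (∑ i, (Ai i).indicator (X i) ω) ∂μ
      = ∫ ω, (∑ i, (Bi i).indicator (Y i) ω) ∂μ := by
    rw [integral_finset_sum _ fun i _ => h_int_Ai i,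
      integral_finset_sum _ fun i _ => h_int_Bi i]
    exact Finset.sum_congr rfl fun i _ => hI1 i
  have : ∫ ω, M ω ∂μ ≤ 2 * ∫ ω, A.indicator M ω ∂μ := by
    have := key2
    rw [hsplit, ← hAB] at this
    linarith
  linarith
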